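/- Let Γ be a set of temporal valued relations on ℚ and let α ∈ ℚ with α > 1/3. If the valued relation R_{α,0,1} belongs to ⟨Γ⟩, then the crisp relation Cyc belongs to ⟨Γ⟩. -/

import Mathlib

open Classical

/-- A valued relation of arity `k` on `ℚ`. -/
abbrev VRel (k : ℕ) : Type := (Fin k → ℚ) → WithTop ℚ

/-- The crisp valued relation associated to a set of tuples: `0` on the set, `∞` off it. -/
noncomputable def crisp {k : ℕ} (S : Set (Fin k → ℚ)) : VRel k :=
  fun t => if t ∈ S then 0 else ⊤

/-- A unary operation improves a valued relation. -/
def Improves1 (f : ℚ → ℚ) {k : ℕ} (R : VRel k) : Prop :=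
  ∀ t : Fin k → ℚ, R (fun i => f (t i)) ≤ R t

/-- A binary operation improves a valued relation: `2·R(g(s,t)) ≤ R(s) + R(t)`. -/
def Improves2 (g : ℚ → ℚ → ℚ) {k : ℕ} (R : VRel k) : Prop :=
  ∀ s t : Fin k → ℚ, 2 • R (fun i => g (s i) (t i)) ≤ R s + R t

/-- A valued relation is temporal if it is invariant under all order-preserving
bijections of `ℚ`. -/
def Temporal {k : ℕ} (R : VRel k) : Prop :=
  ∀ α : ℚ → ℚ, Function.Bijective α → StrictMono α →
    ∀ t : Fin k → ℚ, R (fun i => α (t i)) = R t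

/-- A valued relation is `Sym(ℚ)`-invariant if it is invariant under all bijections of `ℚ`. -/
def SymInvariant {k : ℕ} (R : VRel k) : Prop :=
  ∀ α : ℚ → ℚ, Function.Bijective α →
    ∀ t : Fin k → ℚ, R (fun i => α (t i)) = R t

/-- The valued relational clone generated by a set `Γ` of valued relations on `ℚ`:
the smallest set of valued relations containing `Γ`, crisp equality and the crisp empty
unary relation, closed under sums of atomic expressions, projection (infimum over extra
coordinates), shifting, nonnegative scaling, `Feas` and `Opt`. -/
inductive Clone (Γ : Set ((k : ℕ) × VRel k)) : {k : ℕ} → VRel k → Prop where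
  | base {k : ℕ} {R : VRel k} : Sigma.mk k R ∈ Γ → Clone Γ R
  | eqRel : Clone Γ (crisp {t : Fin 2 → ℚ | t 0 = t 1})
  | emptyRel : Clone Γ (crisp (∅ : Set (Fin 1 → ℚ)))
  | sum {m n : ℕ} {k : Fin m → ℕ} {R : ∀ i : Fin m, VRel (k i)}
      (σ : ∀ i : Fin m, Fin (k i) → Fin n) :
      (∀ i : Fin m, Clone Γ (R i)) →
      Clone Γ (fun x : Fin n → ℚ => ∑ i : Fin m, R i (fun j => x (σ i j)))
  | proj {k n : ℕ} {R : VRel (k + n)} {R' : VRel k} :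
      Clone Γ R →
      (∀ s : Fin k → ℚ,
        IsGLB {v : WithTop ℚ | ∃ t : Fin n → ℚ, v = R (Fin.append s t)} (R' s)) →
      Clone Γ R'
  | shift {k : ℕ} {R : VRel k} (c : ℚ) :
      Clone Γ R → Clone Γ (fun t => R t + (c : WithTop ℚ))
  | scale {k : ℕ} {R : VRel k} (q : ℚ) (hq : 0 ≤ q) :
      Clone Γ R → Clone Γ (fun t => (q : WithTop ℚ) * R t)
  | feas {k : ℕ} {R : VRel k} :
      Clone Γ R → Clone Γ (fun t => if R t ≠ ⊤ then 0 else ⊤)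
  | opt {k : ℕ} {R : VRel k} :
      Clone Γ R → Clone Γ (fun t => if R t ≠ ⊤ ∧ ∀ s, R t ≤ R s then 0 else ⊤)

/-- The crisp binary order relation `<` on `ℚ`. -/
def LtS : Set (Fin 2 → ℚ) := {t | t 0 < t 1}

/-- The crisp binary disequality relation on `ℚ`. -/
def NeS : Set (Fin 2 → ℚ) := {t | t 0 ≠ t 1}

def BetwS : Set (Fin 3 → ℚ) :=
  {t | (t 0 < t 1 ∧ t 1 < t 2) ∨ (t 2 < t 1 ∧ t 1 < t 0)}

def CycS : Set (Fin 3 → ℚ) :=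
  {t | (t 0 < t 1 ∧ t 1 < t 2) ∨ (t 1 < t 2 ∧ t 2 < t 0) ∨ (t 2 < t 0 ∧ t 0 < t 1)}

/-- `c` lies strictly between `a` and `b`. -/
def StrictBetween (a b c : ℚ) : Prop := (a < c ∧ c < b) ∨ (b < c ∧ c < a)

def SepS : Set (Fin 4 → ℚ) :=
  {t | Function.Injective t ∧
    Xor' (StrictBetween (t 0) (t 1) (t 2)) (StrictBetween (t 0) (t 1) (t 3))}

def T3S : Set (Fin 3 → ℚ) :=
  {t | (t 0 = t 1 ∧ t 1 < t 2) ∨ (t 0 = t 2 ∧ t 2 < t 1)}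

def NegT3S : Set (Fin 3 → ℚ) := {t | (fun i => -(t i)) ∈ T3S}

def DisS : Set (Fin 3 → ℚ) :=
  {t | (t 0 = t 1 ∧ t 1 ≠ t 2) ∨ (t 0 ≠ t 1 ∧ t 1 = t 2)}

/-- The binary valued relation `R_{α,β,γ}` on `ℚ`. -/
noncomputable def Rabc (a b c : WithTop ℚ) : VRel 2 :=
  fun t => if t 0 = t 1 then a else if t 0 < t 1 then b else c

/-- A lex-operation on `ℚ`. -/
def IsLex (l : ℚ → ℚ → ℚ) : Prop :=
  ∀ x x' y y' : ℚ, l x y < l x' y' ↔ (x < x' ∨ (x = x' ∧ y < y'))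

/-- The dual of a binary operation on `ℚ`. -/
def dualOp (g : ℚ → ℚ → ℚ) : ℚ → ℚ → ℚ := fun x y => -g (-x) (-y)

/-- Operations of `mx` type. -/
def IsMx (g : ℚ → ℚ → ℚ) : Prop :=
  ∃ ene eeq : ℚ → ℚ, StrictMono ene ∧ StrictMono eeq ∧
    (∀ x ε : ℚ, 0 < ε → ene x < eeq x ∧ eeq x < ene (x + ε)) ∧
    ∀ x y : ℚ, g x y = if x = y then eeq x else ene (min x y)

/-- Operations of `mi` type. -/
def IsMi (g : ℚ → ℚ → ℚ) : Prop :=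
  ∃ elt eeq egt : ℚ → ℚ, StrictMono elt ∧ StrictMono eeq ∧ StrictMono egt ∧
    (∀ x ε : ℚ, 0 < ε → eeq x < egt x ∧ egt x < elt x ∧ elt x < eeq (x + ε)) ∧
    ∀ x y : ℚ, g x y = if x < y then elt x else if x = y then eeq x else egt y

/-- Operations of `lele` type. -/
def IsLele (g : ℚ → ℚ → ℚ) : Prop :=
  ∃ eneg epos : ℚ → ℚ, StrictMono eneg ∧ StrictMono epos ∧
    (∀ x, eneg x < 0) ∧ (∀ x, 0 < epos x) ∧
    ∃ l, IsLex l ∧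
      ∀ x y : ℚ, g x y = if x ≤ 0 then l (eneg x) (eneg y) else l (epos y) (epos x)

/-- A binary operation preserves a crisp relation (given as a set of tuples). -/
def Pres2 (g : ℚ → ℚ → ℚ) {k : ℕ} (S : Set (Fin k → ℚ)) : Prop :=
  ∀ s t : Fin k → ℚ, s ∈ S → t ∈ S → (fun i => g (s i) (t i)) ∈ S

/-- The feasibility relation of a valued relation. -/
def FeasSet {k : ℕ} (R : VRel k) : Set (Fin k → ℚ) := {t | R t ≠ ⊤}

/-- The set of minimal-value feasible tuples of a valued relation. -/
def OptSet {k : ℕ} (R : VRel k) : Set (Fin k → ℚ) := {t | R t ≠ ⊤ ∧ ∀ s, R t ≤ R s}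

/-- `g` preserves every relation of the crisp structure `Γ̂`, consisting of `Feas(R)`
for `R ∈ Γ` and `Opt(R_σ)` for all minors `R_σ` of relations `R ∈ Γ`. -/
def PresHat (g : ℚ → ℚ → ℚ) (Γ : Set ((k : ℕ) × VRel k)) : Prop :=
  ∀ p ∈ Γ, Pres2 g (FeasSet p.2) ∧
    ∀ (n : ℕ) (σ : Fin p.1 → Fin n),
      Pres2 g (OptSet (fun x : Fin n → ℚ => p.2 (fun j => x (σ j))))

/-- `g` is min, max, of mx/mi/lele type, or the dual of an mx/mi/lele type operation. -/
def GoodOp (g : ℚ → ℚ → ℚ) : Prop :=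
  g = (fun x y => min x y) ∨ g = (fun x y => max x y) ∨ IsMx g ∨ IsMi g ∨ IsLele g ∨
    ∃ h, (IsMx h ∨ IsMi h ∨ IsLele h) ∧ g = dualOp h

/-- `g` is the constant-zero binary operation, min, max, or of mx/mi/lele type. -/
def BaseOp (g : ℚ → ℚ → ℚ) : Prop :=
  g = (fun _ _ => (0 : ℚ)) ∨ g = (fun x y => min x y) ∨ g = (fun x y => max x y) ∨
    IsMx g ∨ IsMi g ∨ IsLele g

/-- The rational-valued cost function underlying `R_{α,0,1}`. -/
noncomputable def fQ (α x y : ℚ) : ℚ := if x = y then α else if x < y then 0 else 1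

/-- The cyclic sum of the costs. -/
noncomputable def gQ (α : ℚ) (t : Fin 3 → ℚ) : ℚ :=
  fQ α (t 0) (t 1) + fQ α (t 1) (t 2) + fQ α (t 2) (t 0)

lemma gQ_ge (α : ℚ) (hα : 1 / 3 < α) (t : Fin 3 → ℚ) : 1 ≤ gQ α t := by
  unfold gQ fQ
  split_ifs <;> linarith

lemma gQ_eq_one (α : ℚ) (t : Fin 3 → ℚ) (ht : t ∈ CycS) : gQ α t = 1 := by
  simp only [CycS, Set.mem_setOf_eq] at ht
  unfold gQ fQ
  rcases ht with ⟨h1, h2⟩ | ⟨h1, h2⟩ | ⟨h1, h2⟩ <;> split_ifs <;> linarith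

lemma gQ_gt_one (α : ℚ) (hα : 1 / 3 < α) (t : Fin 3 → ℚ) (ht : t ∉ CycS) :
    1 < gQ α t := by
  simp only [CycS, Set.mem_setOf_eq] at ht
  push_neg at ht
  obtain ⟨ht1, ht2, ht3⟩ := ht
  unfold gQ fQ
  split_ifs <;>
    first
      | linarith
      | linarith [ht1 (by linarith)]
      | linarith [ht2 (by linarith)]
      | linarith [ht3 (by linarith)]

lemma Rabc_coe (α : ℚ) (t : Fin 2 → ℚ) :
    Rabc (α : WithTop ℚ) 0 1 t = ((fQ α (t 0) (t 1) : ℚ) : WithTop ℚ) := by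
  unfold Rabc fQ
  split_ifs <;> simp

/-- The cyclic sum of `R_{α,0,1}` is the coercion of `gQ`. -/
lemma sum_eq_gQ (α : ℚ) (x : Fin 3 → ℚ) :
    (∑ i : Fin 3, Rabc (α : WithTop ℚ) 0 1
        (fun j => x ((![![0,1], ![1,2], ![2,0]] : Fin 3 → Fin 2 → Fin 3) i j)))
      = ((gQ α x : ℚ) : WithTop ℚ) := by
  rw [Fin.sum_univ_three, Rabc_coe, Rabc_coe, Rabc_coe]
  simp only [gQ]
  norm_num
  rfl

/-- If `⟨Γ⟩` contains `R_{α,0,1}` with `α > 1/3`, for `Γ` a set of temporal valued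
relations, then `⟨Γ⟩` contains the crisp relation `Cyc`. -/
theorem stmt6 (Γ : Set ((k : ℕ) × VRel k)) (hT : ∀ p ∈ Γ, Temporal p.2)
    (α : ℚ) (hα : 1 / 3 < α) (h : Clone Γ (Rabc (α : WithTop ℚ) 0 1)) :
    Clone Γ (crisp CycS) := by
  have hS := Clone.sum (Γ := Γ) (n := 3) (k := fun _ : Fin 3 => 2)
      (R := fun _ => Rabc (α : WithTop ℚ) 0 1)
      (![![0,1], ![1,2], ![2,0]] : Fin 3 → Fin 2 → Fin 3) (fun _ => h)
  have hO := Clone.opt hS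
  have key : (fun t : Fin 3 → ℚ =>
      if (∑ i : Fin 3, Rabc (α : WithTop ℚ) 0 1
            (fun j => t ((![![0,1], ![1,2], ![2,0]] : Fin 3 → Fin 2 → Fin 3) i j))) ≠ ⊤ ∧
          ∀ s : Fin 3 → ℚ, (∑ i : Fin 3, Rabc (α : WithTop ℚ) 0 1
            (fun j => t ((![![0,1], ![1,2], ![2,0]] : Fin 3 → Fin 2 → Fin 3) i j)))
            ≤ (∑ i : Fin 3, Rabc (α : WithTop ℚ) 0 1
            (fun j => s ((![![0,1], ![1,2], ![2,0]] : Fin 3 → Fin 2 → Fin 3) i j)))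
        then 0 else ⊤) = crisp CycS := by
    funext t
    rw [crisp]
    have hc : ((∑ i : Fin 3, Rabc (α : WithTop ℚ) 0 1
        (fun j => t ((![![0,1], ![1,2], ![2,0]] : Fin 3 → Fin 2 → Fin 3) i j))) ≠ ⊤ ∧
        ∀ s : Fin 3 → ℚ, (∑ i : Fin 3, Rabc (α : WithTop ℚ) 0 1
            (fun j => t ((![![0,1], ![1,2], ![2,0]] : Fin 3 → Fin 2 → Fin 3) i j)))
            ≤ (∑ i : Fin 3, Rabc (α : WithTop ℚ) 0 1
            (fun j => s ((![![0,1], ![1,2], ![2,0]] : Fin 3 → Fin 2 → Fin 3) i j))))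
        ↔ t ∈ CycS := by
      simp only [sum_eq_gQ]
      constructor
      · rintro ⟨-, hall⟩
        by_contra hnot
        have h1 := hall ![0, 1, 2]
        rw [WithTop.coe_le_coe] at h1
        have h2 : gQ α ![0, 1, 2] = 1 := by
          apply gQ_eq_one
          simp only [CycS, Set.mem_setOf_eq]
          left
          norm_num
          exact (by norm_num : (1:ℚ) < 2)
        have := gQ_gt_one α hα t hnot
        rw [h2] at h1
        linarith
      · intro hin
        refine ⟨WithTop.coe_ne_top, fun s => ?_⟩
        rw [WithTop.coe_le_coe, gQ_eq_one α t hin]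
        exact gQ_ge α hα s
    by_cases hmem : t ∈ CycS
    · rw [if_pos (hc.mpr hmem), if_pos hmem]
    · rw [if_neg (fun hcon => hmem (hc.mp hcon)), if_neg hmem]
  rwa [key] at hO
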